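/- Let n ≥ 1. For every k ∈ SO(n,ℝ) there exist a matrix u upper triangular with positive diagonal, a unit lower triangular matrix l, and a signed permutation matrix q with det q = 1, such that k = u·l·q. -/

import Mathlib

open Matrix

/-- Unit lower triangular: `1`s on the diagonal, `0`s above it. -/
def IsUnitLower {n : ℕ} (M : Matrix (Fin n) (Fin n) ℝ) : Prop :=
  (∀ i, M i i = 1) ∧ ∀ i j : Fin n, i < j → M i j = 0

/-- Upper triangular with strictly positive diagonal entries. -/
def IsUpperPos {n : ℕ} (M : Matrix (Fin n) (Fin n) ℝ) : Prop :=
  (∀ i j : Fin n, j < i → M i j = 0) ∧ ∀ i, 0 < M i i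

/-- `SO(n,ℝ)`. -/
def IsSO {n : ℕ} (k : Matrix (Fin n) (Fin n) ℝ) : Prop :=
  kᵀ * k = 1 ∧ k.det = 1

/-- Signed permutation matrix: exactly one nonzero entry, equal to `±1`,
in each row and column. -/
def IsSignedPerm {n : ℕ} (q : Matrix (Fin n) (Fin n) ℝ) : Prop :=
  ∃ σ : Equiv.Perm (Fin n), ∃ ε : Fin n → ℝ, (∀ i, ε i = 1 ∨ ε i = -1) ∧
    ∀ a b : Fin n, q a b = if a = σ b then ε b else 0

lemma key_lemma : ∀ (n : ℕ) (A : Matrix (Fin n) (Fin n) ℝ), A.det ≠ 0 →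
    ∃ (L U : Matrix (Fin n) (Fin n) ℝ) (σ : Equiv.Perm (Fin n)) (ε : Fin n → ℝ),
      (∀ i j : Fin n, i < j → L i j = 0) ∧ (∀ i, 0 < L i i) ∧
      (∀ i : Fin n, U i i = 1) ∧ (∀ i j : Fin n, j < i → U i j = 0) ∧
      (∀ i, ε i = 1 ∨ ε i = -1) ∧
      (∀ a c, A a c = (L * U) a (σ c) * ε c) := by
  intro n
  induction n with
  | zero =>
    intro A _
    exact ⟨1, 1, 1, 1, fun i => i.elim0, fun i => i.elim0, fun i => i.elim0,
      fun i => i.elim0, fun i => i.elim0, fun a => a.elim0⟩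
  | succ n ih =>
    intro A hA
    obtain ⟨j, hj⟩ : ∃ j, A 0 j ≠ 0 := by
      by_contra h
      push_neg at h
      exact hA (Matrix.det_eq_zero_of_row_eq_zero 0 h)
    set τ : Equiv.Perm (Fin (n+1)) := Equiv.swap 0 j with hτ
    have hττ : ∀ c, τ (τ c) = c := fun c => Equiv.swap_apply_self 0 j c
    set s : ℝ := if 0 < A 0 j then 1 else -1 with hs
    have hs1 : s = 1 ∨ s = -1 := by rw [hs]; split <;> simp
    set s0 : Fin (n+1) → ℝ := fun b => if b = 0 then s else 1 with hs0
    have hs0pm : ∀ b, s0 b = 1 ∨ s0 b = -1 := by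
      intro b; rw [hs0]; dsimp only; split
      · exact hs1
      · exact Or.inl rfl
    have hs0sq : ∀ b, s0 b * s0 b = 1 := by
      intro b; rcases hs0pm b with h | h <;> rw [h] <;> norm_num
    set A1 : Matrix (Fin (n+1)) (Fin (n+1)) ℝ := Matrix.of fun a b => A a (τ b) * s0 b with hA1
    have hτ0 : τ 0 = j := Equiv.swap_apply_left 0 j
    have hA100 : A1 0 0 = A 0 j * s := by simp [hA1, hτ0, hs0]
    set p : ℝ := A1 0 0 with hpdef
    have hp : 0 < p := by
      rw [hA100, hs]
      rcases lt_trichotomy (A 0 j) 0 with h | h | h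
      · rw [if_neg (by linarith)]; linarith
      · exact absurd h hj
      · rw [if_pos h]; linarith
    have hp0 : p ≠ 0 := ne_of_gt hp
    have hdetA1 : A1.det ≠ 0 := by
      have hfac : A1 = (A.submatrix id ⇑τ) * Matrix.diagonal s0 := by
        ext a b
        simp [hA1, Matrix.mul_diagonal]
      rw [hfac, Matrix.det_mul, Matrix.det_diagonal, Matrix.det_permute']
      refine mul_ne_zero (mul_ne_zero ?_ hA) (Finset.prod_ne_zero_iff.2 fun b _ => ?_)
      · rcases Int.units_eq_one_or (Equiv.Perm.sign τ) with h | h <;> rw [h] <;> norm_num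
      · rcases hs0pm b with h | h <;> rw [h] <;> norm_num
    set B : Matrix (Fin n) (Fin n) ℝ :=
      Matrix.of fun i k => A1 i.succ k.succ - A1 i.succ 0 * A1 0 k.succ / p with hB
    set E : Matrix (Fin (n+1)) (Fin (n+1)) ℝ :=
      Matrix.of (Fin.cons (Fin.cons 1 0) fun i =>
        Fin.cons (A1 i.succ 0 / p) fun k => if i = k then 1 else 0) with hE
    set M : Matrix (Fin (n+1)) (Fin (n+1)) ℝ :=
      Matrix.of (Fin.cons (A1 0) fun i => Fin.cons 0 (B i)) with hM
    have hEM : A1 = E * M := by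
      ext a b
      rw [Matrix.mul_apply, Fin.sum_univ_succ]
      refine Fin.cases ?_ (fun i => ?_) a
      · simp [hE, hM]
      · refine Fin.cases ?_ (fun m => ?_) b
        · simp [hE, hM, Finset.sum_ite_eq]
          field_simp
          rw [hpdef]
        · simp [hE, hM, Finset.sum_ite_eq, ite_mul, hB]
          ring
    have hdetM : M.det = p * B.det := by
      rw [Matrix.det_succ_column_zero, Fin.sum_univ_succ]
      have h1 : ∀ i : Fin n, M i.succ 0 = 0 := fun i => by simp [hM]
      have h2 : M.submatrix Fin.succ Fin.succ = B := by
        ext i k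
        simp [hM]
      have h3 : M 0 0 = p := by simp [hM]; exact hpdef.symm
      simp [h1, h3, Fin.succAbove_zero, h2]
    have hdetB : B.det ≠ 0 := by
      intro h
      apply hdetA1
      rw [hEM, Matrix.det_mul, hdetM, h, mul_zero, mul_zero]
    obtain ⟨L', U', σ', ε', hL'u, hL'd, hU'd, hU'l, hε', hfac'⟩ := ih B hdetB
    have hε'sq : ∀ k, ε' k * ε' k = 1 := by
      intro k; rcases hε' k with h | h <;> rw [h] <;> norm_num
    set v : Fin n → ℝ := fun m => A1 0 (σ'.symm m).succ * ε' (σ'.symm m) / p with hv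
    set L : Matrix (Fin (n+1)) (Fin (n+1)) ℝ :=
      Matrix.of (Fin.cons (Fin.cons p 0) fun i => Fin.cons (A1 i.succ 0) (L' i)) with hL
    set U : Matrix (Fin (n+1)) (Fin (n+1)) ℝ :=
      Matrix.of (Fin.cons (Fin.cons 1 v) fun i => Fin.cons 0 (U' i)) with hU
    set σ'' : Equiv.Perm (Fin (n+1)) := Equiv.Perm.decomposeFin.symm (0, σ') with hσ''
    set ε'' : Fin (n+1) → ℝ := Fin.cons 1 ε' with hε''
    have hLU00 : (L * U) 0 0 = p := by
      rw [Matrix.mul_apply, Fin.sum_univ_succ]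
      simp [hL, hU]
    have hLU0s : ∀ m : Fin n, (L * U) 0 m.succ = p * v m := by
      intro m
      rw [Matrix.mul_apply, Fin.sum_univ_succ]
      simp [hL, hU]
    have hLUs0 : ∀ i : Fin n, (L * U) i.succ 0 = A1 i.succ 0 := by
      intro i
      rw [Matrix.mul_apply, Fin.sum_univ_succ]
      simp [hL, hU]
    have hLUss : ∀ i m : Fin n, (L * U) i.succ m.succ = A1 i.succ 0 * v m + (L' * U') i m := by
      intro i m
      rw [Matrix.mul_apply, Fin.sum_univ_succ]
      simp [hL, hU, Matrix.mul_apply]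
    have hσ''0 : σ'' 0 = 0 := by simp [hσ'']
    have hσ''s : ∀ k : Fin n, σ'' k.succ = (σ' k).succ := by
      intro k; simp [hσ'']
    have H1 : ∀ a b, A1 a b = (L * U) a (σ'' b) * ε'' b := by
      intro a b
      refine Fin.cases ?_ (fun k => ?_) b
      · rw [hσ''0]
        have : ε'' 0 = 1 := rfl
        rw [this, mul_one]
        refine Fin.cases ?_ (fun i => ?_) a
        · rw [hLU00]
        · rw [hLUs0]
      · rw [hσ''s k]
        have hek : ε'' k.succ = ε' k := by simp [hε'']
        rw [hek]
        have hvs : v (σ' k) = A1 0 k.succ * ε' k / p := by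
          simp [hv, Equiv.symm_apply_apply]
        refine Fin.cases ?_ (fun i => ?_) a
        · rw [hLU0s, hvs]
          rw [show p * (A1 0 k.succ * ε' k / p) * ε' k
              = A1 0 k.succ * (ε' k * ε' k) * (p / p) from by ring,
            div_self hp0, hε'sq k, mul_one, mul_one]
        · rw [hLUss, hvs]
          have hBik := hfac' i k
          have hBdef : B i k = A1 i.succ k.succ - A1 i.succ 0 * A1 0 k.succ / p := rfl
          have h4 : (L' * U') i (σ' k) * ε' k = B i k := hBik.symm
          have h5 : A1 i.succ 0 * (A1 0 k.succ * ε' k / p) * ε' k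
              = A1 i.succ 0 * A1 0 k.succ / p := by
            rw [show A1 i.succ 0 * (A1 0 k.succ * ε' k / p) * ε' k
                = A1 i.succ 0 * A1 0 k.succ / p * (ε' k * ε' k) from by ring,
              hε'sq k, mul_one]
          rw [add_mul, h5, h4, hBdef]
          ring
    have hε''pm : ∀ b, ε'' b = 1 ∨ ε'' b = -1 := by
      intro b
      refine Fin.cases ?_ (fun i => ?_) b
      · exact Or.inl (by simp [hε''])
      · simpa [hε''] using hε' i
    refine ⟨L, U, τ.trans σ'', fun c => ε'' (τ c) * s0 (τ c), ?_, ?_, ?_, ?_, ?_, ?_⟩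
    · intro i j'
      refine Fin.cases ?_ (fun i' => ?_) i <;> refine Fin.cases ?_ (fun m => ?_) j' <;> intro hij
      · exact absurd hij (lt_irrefl _)
      · simp [hL]
      · exact absurd hij (not_lt.mpr (Fin.zero_le _))
      · simpa [hL] using hL'u i' m (by exact_mod_cast Fin.succ_lt_succ_iff.mp hij)
    · intro i
      refine Fin.cases ?_ (fun i' => ?_) i
      · simpa [hL] using hp
      · simpa [hL] using hL'd i'
    · intro i
      refine Fin.cases ?_ (fun i' => ?_) i
      · simp [hU]
      · simpa [hU] using hU'd i'
    · intro i j'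
      refine Fin.cases ?_ (fun i' => ?_) i <;> refine Fin.cases ?_ (fun m => ?_) j' <;> intro hij
      · exact absurd hij (lt_irrefl _)
      · exact absurd hij (not_lt.mpr (Fin.zero_le _))
      · simp [hU]
      · simpa [hU] using hU'l i' m (by exact_mod_cast Fin.succ_lt_succ_iff.mp hij)
    · intro i
      rcases hε''pm (τ i) with h1 | h1 <;> rcases hs0pm (τ i) with h2 | h2 <;>
        norm_num [h1, h2]
    · intro a c
      have h1 := H1 a (τ c)
      have h2 : A a c = A1 a (τ c) * s0 (τ c) := by
        have h3 : A1 a (τ c) = A a (τ (τ c)) * s0 (τ c) := rfl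
        rw [h3, hττ, mul_assoc, hs0sq, mul_one]
      rw [h2, h1]
      simp only [Equiv.trans_apply]
      ring

theorem stmt_6 (n : ℕ) (hn : 1 ≤ n) (k : Matrix (Fin n) (Fin n) ℝ) (hk : IsSO k) :
    ∃ u l q : Matrix (Fin n) (Fin n) ℝ,
      IsUpperPos u ∧ IsUnitLower l ∧ IsSignedPerm q ∧ q.det = 1 ∧ k = u * l * q := by
  set ρ : Equiv.Perm (Fin n) := Fin.revPerm with hρ
  set A : Matrix (Fin n) (Fin n) ℝ := k.submatrix ⇑ρ ⇑ρ with hAdef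
  have hAdet1 : A.det = 1 := by
    rw [hAdef, Matrix.det_submatrix_equiv_self, hk.2]
  have hdetA : A.det ≠ 0 := by rw [hAdet1]; norm_num
  obtain ⟨L, U, σ, ε, hLu, hLd, hUd, hUl, hε, hfac⟩ := key_lemma n A hdetA
  set Q : Matrix (Fin n) (Fin n) ℝ := Matrix.of fun a b => if a = σ b then ε b else 0
    with hQdef
  have hAQ : A = L * U * Q := by
    ext a c
    rw [Matrix.mul_apply]
    have h1 : ∀ b, (L * U) a b * Q b c = if b = σ c then (L * U) a b * ε c else 0 := by
      intro b; rw [hQdef]; dsimp only [Matrix.of_apply]; split <;> simp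
    simp_rw [h1]
    rw [Finset.sum_ite_eq' Finset.univ (σ c) (fun b => (L * U) a b * ε c)]
    simpa using hfac a c
  have hdetU : U.det = 1 := by
    rw [Matrix.det_of_upperTriangular (fun i j h => hUl i j h)]
    exact Finset.prod_eq_one fun i _ => hUd i
  have hdetLpos : 0 < L.det := by
    rw [Matrix.det_of_lowerTriangular L (fun i j h => hLu i j h)]
    exact Finset.prod_pos fun i _ => hLd i
  have hQfac : Q = (Matrix.diagonal ε).submatrix ⇑σ⁻¹ id := by
    ext a b
    rw [hQdef]
    simp only [Matrix.submatrix_apply, Matrix.diagonal_apply, Matrix.of_apply, id]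
    by_cases h : a = σ b
    · rw [if_pos h, if_pos (by rw [h]; simp), h]; simp
    · rw [if_neg h, if_neg (fun hc => h (by rw [← hc]; simp))]
  have hdetQ : Q.det = 1 ∨ Q.det = -1 := by
    rw [hQfac, Matrix.det_permute, Matrix.det_diagonal]
    have hprod : (∏ i, ε i) = 1 ∨ (∏ i, ε i) = -1 := by
      refine mul_self_eq_one_iff.mp ?_
      rw [← Finset.prod_mul_distrib]
      exact Finset.prod_eq_one fun i _ => by rcases hε i with h | h <;> rw [h] <;> norm_num
    rcases Int.units_eq_one_or (Equiv.Perm.sign σ⁻¹) with h | h <;>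
      rcases hprod with h2 | h2 <;> rw [h, h2] <;> norm_num
  have hdetQ1 : Q.det = 1 := by
    rcases hdetQ with h | h
    · exact h
    · exfalso
      rw [hAQ, Matrix.det_mul, Matrix.det_mul, hdetU, h] at hAdet1
      nlinarith [hdetLpos]
  have hrevcond : ∀ a x : Fin n, (Fin.rev a = x) ↔ (a = Fin.rev x) := by
    intro a x
    constructor <;> intro h
    · rw [← h, Fin.rev_rev]
    · rw [h, Fin.rev_rev]
  refine ⟨L.submatrix ⇑ρ ⇑ρ, U.submatrix ⇑ρ ⇑ρ, Q.submatrix ⇑ρ ⇑ρ, ⟨?_, ?_⟩, ⟨?_, ?_⟩,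
    ?_, ?_, ?_⟩
  · intro i j h
    exact hLu _ _ (by simpa [hρ] using Fin.rev_lt_rev.mpr h)
  · intro i; exact hLd _
  · intro i; exact hUd _
  · intro i j h
    exact hUl _ _ (by simpa [hρ] using Fin.rev_lt_rev.mpr h)
  · refine ⟨ρ.trans (σ.trans ρ), fun b => ε (ρ b), fun i => hε (ρ i), fun a b => ?_⟩
    simp only [Matrix.submatrix_apply, hQdef, Matrix.of_apply, hρ, Equiv.trans_apply,
      Fin.revPerm_apply]
    exact if_congr (hrevcond a _) rfl rfl
  · rw [Matrix.det_submatrix_equiv_self ρ Q]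
    exact hdetQ1
  · have h1 : (L * U * Q).submatrix ⇑ρ ⇑ρ
        = L.submatrix ⇑ρ ⇑ρ * U.submatrix ⇑ρ ⇑ρ * Q.submatrix ⇑ρ ⇑ρ := by
      rw [Matrix.submatrix_mul_equiv L U ρ ρ ρ, Matrix.submatrix_mul_equiv (L * U) Q ρ ρ ρ]
    have h2 : k = A.submatrix ⇑ρ ⇑ρ := by
      ext a b
      rw [hAdef]
      simp [hρ, Fin.rev_rev]
    rw [h2, hAQ, h1]
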